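/- arXiv:2005.07867 — 3 statements merged into one kernel-verified Lean document; each statement's English description precedes it below -/
import Mathlib

section
/- A copious Condorcet domain satisfies a unique complete set of never conditions: if D ⊆ L(A) is a Condorcet domain whose restriction to every triple has exactly 4 orders, then for each 3-element subset {a,b,c} ⊆ A there is exactly one pair (x, i) with x ∈ {a,b,c}, i ∈ {1,2,3}, such that no order of D restricted to {a,b,c} places x in position i. -/
/-! Linear orders on a finite set `A` are encoded as duplicate-free lists
(top alternative first) whose set of entries is `A`. -/

variable {α β : Type*}

/-- `w` is a (strict) linear order on `A`, written from top to bottom. -/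
def IsLinOrd [DecidableEq α] (A : Finset α) (w : List α) : Prop :=
  w.Nodup ∧ w.toFinset = A

/-- Restriction of the order `w` to the set `B`. -/
def restr [DecidableEq α] (B : Finset α) (w : List α) : List α :=
  w.filter (fun x => decide (x ∈ B))

/-- Strict majority relation of a profile `P` (a list of linear orders):
`a` beats `b` iff strictly more orders of `P` rank `a` above `b`. -/
def Maj [DecidableEq α] (P : List (List α)) (a b : α) : Prop :=
  P.countP (fun w => decide (w.idxOf a < w.idxOf b)) >
    P.countP (fun w => decide (w.idxOf b < w.idxOf a))

/-- `D` is a Condorcet domain on `A`: all members are linear orders on `A` and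
the majority relation of every odd profile over `D` is transitive. -/
def IsCondorcet [DecidableEq α] (A : Finset α) (D : Set (List α)) : Prop :=
  (∀ w ∈ D, IsLinOrd A w) ∧
    ∀ P : List (List α), (∀ w ∈ P, w ∈ D) → Odd P.length →
      ∀ a ∈ A, ∀ b ∈ A, ∀ c ∈ A, Maj P a b → Maj P b c → Maj P a c

/-- The never condition `x N_{a,b,c} i` (1-based position `i`): no order of `D`
restricted to `{a,b,c}` has `x` in the `i`-th position. -/
def Never [DecidableEq α] (D : Set (List α)) (a b c x : α) (i : ℕ) : Prop :=
  ∀ w ∈ D, (restr {a, b, c} w)[i - 1]? ≠ some x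

/-- `D` is a peak-pit domain on `A`: every triple satisfies a never-top or a
never-bottom condition. -/
def PeakPit [DecidableEq α] (A : Finset α) (D : Set (List α)) : Prop :=
  ∀ a ∈ A, ∀ b ∈ A, ∀ c ∈ A, a ≠ b → a ≠ c → b ≠ c →
    ∃ x ∈ ({a, b, c} : Finset α), Never D a b c x 1 ∨ Never D a b c x 3

/-- Concatenation `D1 ⊙ D2` of two domains (all of `A` ranked above all of `B`). -/
def concatDom (D1 D2 : Set (List α)) : Set (List α) :=
  {w | ∃ x ∈ D1, ∃ y ∈ D2, w = x ++ y}

/-- The set `u ⊕ v` of all shuffles of `u ∈ L(A)` and `v ∈ L(B)`. -/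
def shuffles [DecidableEq α] (A B : Finset α) (u v : List α) : Set (List α) :=
  {w | IsLinOrd (A ∪ B) w ∧ restr A w = u ∧ restr B w = v}

/-- The tensor product `(D1 ⊗ D2)(u,v)` of Danilov–Karzanov–Koshevoy. -/
def tensor [DecidableEq α] (A B : Finset α) (D1 D2 : Set (List α))
    (u v : List α) : Set (List α) :=
  concatDom D1 D2 ∪ shuffles A B u v

/-- `D` has maximal width: it contains a pair of completely reversed orders. -/
def MaxWidth (D : Set (List α)) : Prop :=
  ∃ w ∈ D, w.reverse ∈ D

/-- `w'` is obtained from `w` by one swap of adjacent alternatives. -/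
def AdjSwap (w w' : List α) : Prop :=
  ∃ (l r : List α) (x y : α), w = l ++ x :: y :: r ∧ w' = l ++ y :: x :: r

/-- `D` is semi-connected: some order `w ∈ D` is joined to its reverse by a path
inside `D` of adjacent transpositions in which each pair of alternatives is
swapped exactly once (a maximal chain in the weak Bruhat order, of length
`C(|A|,2)`). -/
def SemiConnected (A : Finset α) (D : Set (List α)) : Prop :=
  ∃ (w : List α) (c : ℕ → List α), w ∈ D ∧ c 0 = w ∧
    c (A.card.choose 2) = w.reverse ∧
    (∀ i, i ≤ A.card.choose 2 → c i ∈ D) ∧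
    (∀ i, i < A.card.choose 2 → AdjSwap (c i) (c (i + 1)))

/-- `D` is a maximal Condorcet domain on `A`. -/
def MaxCondorcet [DecidableEq α] (A : Finset α) (D : Set (List α)) : Prop :=
  IsCondorcet A D ∧ ∀ D' : Set (List α), IsCondorcet A D' → D ⊆ D' → D' ⊆ D

/-- Cardinality of the Fishburn domain `F_n` (Galambos–Reiner formula). -/
def fishCard (n : ℕ) : ℕ :=
  (n + 3) * 2 ^ (n - 3) -
    (if Even n then (2 * n - 3) * (n - 2).choose (n / 2 - 1) / 2
     else (n - 1) / 2 * (n - 1).choose ((n - 1) / 2))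

theorem idx_filter_iff [DecidableEq α] (p : α → Bool) (w : List α) (x y : α)
    (hpx : p x = true) (hpy : p y = true) :
    (w.filter p).idxOf x < (w.filter p).idxOf y ↔ w.idxOf x < w.idxOf y := by
  induction w with
  | nil => simp
  | cons h t ih =>
    by_cases hx : x = h
    · subst hx
      rw [List.filter_cons_of_pos hpx]
      by_cases hy : y = x
      · subst hy; simp
      · rw [List.idxOf_cons_self, List.idxOf_cons_self,
          List.idxOf_cons_ne _ (Ne.symm hy), List.idxOf_cons_ne _ (Ne.symm hy)]
        simp
    · by_cases hy : y = h
      · subst hy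
        rw [List.filter_cons_of_pos hpy]
        rw [List.idxOf_cons_self, List.idxOf_cons_self,
          List.idxOf_cons_ne _ (Ne.symm hx), List.idxOf_cons_ne _ (Ne.symm hx)]
        simp
      · by_cases hph : p h = true
        · rw [List.filter_cons_of_pos hph,
            List.idxOf_cons_ne _ (Ne.symm hx), List.idxOf_cons_ne _ (Ne.symm hy),
            List.idxOf_cons_ne _ (Ne.symm hx), List.idxOf_cons_ne _ (Ne.symm hy)]
          simpa using ih
        · rw [List.filter_cons_of_neg (by simpa using hph),
            List.idxOf_cons_ne _ (Ne.symm hx), List.idxOf_cons_ne _ (Ne.symm hy)]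
          simpa using ih

theorem restr_lt [DecidableEq α] {B : Finset α} {w : List α} {x y : α}
    (hx : x ∈ B) (hy : y ∈ B)
    (h : (restr B w).idxOf x < (restr B w).idxOf y) :
    w.idxOf x < w.idxOf y :=
  (idx_filter_iff _ w x y (by simpa) (by simpa)).mp h

theorem idx_triple [DecidableEq α] {x y z : α} (hxy : x ≠ y) (hxz : x ≠ z) (hyz : y ≠ z) :
    ([x, y, z]).idxOf x = 0 ∧ ([x, y, z]).idxOf y = 1 ∧ ([x, y, z]).idxOf z = 2 := by
  refine ⟨List.idxOf_cons_self, ?_, ?_⟩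
  · rw [List.idxOf_cons_ne _ hxy, List.idxOf_cons_self]
  · rw [List.idxOf_cons_ne _ hxz, List.idxOf_cons_ne _ hyz, List.idxOf_cons_self]

theorem cycle_contra [DecidableEq α] {A : Finset α} {D : Set (List α)}
    (hC : IsCondorcet A D) {a b c : α} (ha : a ∈ A) (hb : b ∈ A) (hc : c ∈ A)
    (hab : a ≠ b) (hac : a ≠ c) (hbc : b ≠ c)
    {u v t : List α} (hu : u ∈ D) (hv : v ∈ D) (ht : t ∈ D)
    (hru : restr {a, b, c} u = [a, b, c])
    (hrv : restr {a, b, c} v = [b, c, a])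
    (hrt : restr {a, b, c} t = [c, a, b]) : False := by
  have hma : a ∈ ({a, b, c} : Finset α) := by simp
  have hmb : b ∈ ({a, b, c} : Finset α) := by simp
  have hmc : c ∈ ({a, b, c} : Finset α) := by simp
  -- u : a > b > c
  obtain ⟨hu0, hu1, hu2⟩ := idx_triple hab hac hbc
  obtain ⟨hv0, hv1, hv2⟩ := idx_triple hbc (Ne.symm hab) (Ne.symm hac)
  obtain ⟨ht0, ht1, ht2⟩ := idx_triple (Ne.symm hac) (Ne.symm hbc) hab
  have hu_ab : u.idxOf a < u.idxOf b := restr_lt hma hmb (by rw [hru, hu0, hu1]; omega)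
  have hu_bc : u.idxOf b < u.idxOf c := restr_lt hmb hmc (by rw [hru, hu1, hu2]; omega)
  have hu_ac : u.idxOf a < u.idxOf c := restr_lt hma hmc (by rw [hru, hu0, hu2]; omega)
  have hv_bc : v.idxOf b < v.idxOf c := restr_lt hmb hmc (by rw [hrv, hv0, hv1]; omega)
  have hv_ca : v.idxOf c < v.idxOf a := restr_lt hmc hma (by rw [hrv, hv1, hv2]; omega)
  have hv_ba : v.idxOf b < v.idxOf a := restr_lt hmb hma (by rw [hrv, hv0, hv2]; omega)
  have ht_ca : t.idxOf c < t.idxOf a := restr_lt hmc hma (by rw [hrt, ht0, ht1]; omega)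
  have ht_ab : t.idxOf a < t.idxOf b := restr_lt hma hmb (by rw [hrt, ht1, ht2]; omega)
  have ht_cb : t.idxOf c < t.idxOf b := restr_lt hmc hmb (by rw [hrt, ht0, ht2]; omega)
  set P : List (List α) := [u, v, t] with hP
  have hPD : ∀ w ∈ P, w ∈ D := by intro w hw; simp [hP] at hw; rcases hw with rfl | rfl | rfl <;> assumption
  have hodd : Odd P.length := by simp [hP]; decide
  have hmab : Maj P a b := by
    simp [Maj, hP, List.countP_cons, hu_ab, ht_ab, Nat.lt_asymm hv_ba, Nat.lt_asymm hu_ab,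
      Nat.lt_asymm ht_ab, hv_ba]
  have hmbc : Maj P b c := by
    simp [Maj, hP, List.countP_cons, hu_bc, hv_bc, Nat.lt_asymm ht_cb, Nat.lt_asymm hu_bc,
      Nat.lt_asymm hv_bc, ht_cb]
  have hmca : Maj P c a := by
    simp [Maj, hP, List.countP_cons, hv_ca, ht_ca, Nat.lt_asymm hu_ac, Nat.lt_asymm hv_ca,
      Nat.lt_asymm ht_ca, hu_ac]
  have hmac : Maj P a c := hC.2 P hPD hodd a ha b hb c hc hmab hmbc
  rw [Maj] at hmac hmca
  omega

theorem perm3 [DecidableEq α] {a b c : α} {l : List α} (hl : l.Nodup)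
    (hset : l.toFinset = {a, b, c}) (hab : a ≠ b) (hac : a ≠ c) (hbc : b ≠ c) :
    l = [a, b, c] ∨ l = [b, c, a] ∨ l = [c, a, b] ∨
    l = [a, c, b] ∨ l = [c, b, a] ∨ l = [b, a, c] := by
  have hlen : l.length = 3 := by
    have h1 : l.toFinset.card = l.length := List.toFinset_card_of_nodup hl
    rw [hset] at h1
    rw [← h1]
    rw [Finset.card_insert_of_notMem (by simp [hab, hac]),
      Finset.card_insert_of_notMem (by simp [hbc])]
    simp
  obtain ⟨x, y, z, rfl⟩ := List.length_eq_three.mp hlen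
  have hx : x = a ∨ x = b ∨ x = c := by
    have : x ∈ ({a, b, c} : Finset α) := by rw [← hset]; simp
    simpa using this
  have hy : y = a ∨ y = b ∨ y = c := by
    have : y ∈ ({a, b, c} : Finset α) := by rw [← hset]; simp
    simpa using this
  have hz : z = a ∨ z = b ∨ z = c := by
    have : z ∈ ({a, b, c} : Finset α) := by rw [← hset]; simp
    simpa using this
  simp only [List.nodup_cons, List.mem_cons] at hl
  rcases hx with rfl | rfl | rfl <;> rcases hy with rfl | rfl | rfl <;>
    rcases hz with rfl | rfl | rfl <;> simp_all

theorem restr_linord [DecidableEq α] {A B : Finset α} {w : List α}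
    (hw : IsLinOrd A w) (hBA : B ⊆ A) :
    (restr B w).Nodup ∧ (restr B w).toFinset = B := by
  obtain ⟨hnd, hset⟩ := hw
  refine ⟨hnd.filter _, ?_⟩
  rw [restr, List.toFinset_filter, hset]
  ext z
  simp only [Finset.mem_filter, decide_eq_true_eq]
  exact ⟨fun h => h.2, fun h => ⟨hBA h, h⟩⟩

theorem never_char [DecidableEq α] {D : Set (List α)} {a b c x : α} {i : ℕ} {e o : List α}
    (he : e[i - 1]? = some x) (ho : o[i - 1]? = some x)
    (hothers : ∀ w ∈ D, restr {a, b, c} w ≠ e → restr {a, b, c} w ≠ o →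
      (restr {a, b, c} w)[i - 1]? ≠ some x) :
    Never D a b c x i ↔ (e ∉ restr {a, b, c} '' D ∧ o ∉ restr {a, b, c} '' D) := by
  constructor
  · intro hN
    constructor
    · rintro ⟨w, hw, hwe⟩
      exact hN w hw (by rw [hwe]; exact he)
    · rintro ⟨w, hw, hwo⟩
      exact hN w hw (by rw [hwo]; exact ho)
  · rintro ⟨he', ho'⟩ w hw
    by_cases h1 : restr {a, b, c} w = e
    · exact absurd ⟨w, hw, h1⟩ he'
    by_cases h2 : restr {a, b, c} w = o
    · exact absurd ⟨w, hw, h2⟩ ho'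
    exact hothers w hw h1 h2

theorem outer_case [DecidableEq α] {D : Set (List α)} {a b c x0 : α} {i0 : ℕ}
    {six : Finset (List α)} (hcard : six.card = 6)
    (hsub : restr {a, b, c} '' D ⊆ ↑six) (hS4 : (restr {a, b, c} '' D).ncard = 4)
    {me mo : List α} (hme : me ∈ six) (hmo : mo ∈ six) (hnemo : me ≠ mo)
    (hmeS : me ∉ restr {a, b, c} '' D) (hmoS : mo ∉ restr {a, b, c} '' D)
    (hx0 : x0 ∈ ({a, b, c} : Finset α)) (hi0 : i0 ∈ ({1, 2, 3} : Finset ℕ))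
    (hNev0 : Never D a b c x0 i0)
    (key : ∀ x i, x ∈ ({a, b, c} : Finset α) → i ∈ ({1, 2, 3} : Finset ℕ) →
      Never D a b c x i →
      ∃ e o, e ∈ six ∧ o ∈ six ∧ e ≠ o ∧ e ∉ restr {a, b, c} '' D ∧
        o ∉ restr {a, b, c} '' D ∧ e[i - 1]? = some x ∧ o[i - 1]? = some x)
    (huniq : ∀ i ∈ ({1, 2, 3} : Finset ℕ), ∀ x : α,
      me[i - 1]? = some x → mo[i - 1]? = some x → x = x0 ∧ i = i0) :
    ∃! p : α × ℕ, p.1 ∈ ({a, b, c} : Finset α) ∧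
      p.2 ∈ ({1, 2, 3} : Finset ℕ) ∧ Never D a b c p.1 p.2 := by
  refine ⟨(x0, i0), ⟨hx0, hi0, hNev0⟩, ?_⟩
  rintro ⟨x, i⟩ ⟨hx, hi, hn⟩
  obtain ⟨e, o, he6, ho6, heo, heS, hoS, hge, hgo⟩ := key x i hx hi hn
  have hmiss : ∀ s, s ∈ six → s ∉ restr {a, b, c} '' D → s = me ∨ s = mo := by
    intro s hs hsS
    by_contra hcon
    push_neg at hcon
    have hsub2 : restr {a, b, c} '' D ⊆ ↑(six \ {s, me, mo}) := by
      intro z hz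
      simp only [Finset.coe_sdiff, Set.mem_diff, Finset.mem_coe, Finset.coe_insert,
        Set.mem_insert_iff, Finset.coe_singleton, Set.mem_singleton_iff]
      refine ⟨hsub hz, ?_⟩
      rintro (rfl | rfl | rfl)
      · exact hsS hz
      · exact hmeS hz
      · exact hmoS hz
    have hsubset : ({s, me, mo} : Finset (List α)) ⊆ six := by
      intro z hz
      simp only [Finset.mem_insert, Finset.mem_singleton] at hz
      rcases hz with rfl | rfl | rfl <;> assumption
    have hc3 : ({s, me, mo} : Finset (List α)).card = 3 := by
      rw [Finset.card_insert_of_notMem (by simp [hcon.1, hcon.2]),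
        Finset.card_insert_of_notMem (by simp [hnemo])]
      simp
    have hcard' : (six \ {s, me, mo}).card = 3 := by
      rw [Finset.card_sdiff_of_subset hsubset, hcard, hc3]
    have hle := Set.ncard_le_ncard hsub2 (six \ {s, me, mo}).finite_toSet
    rw [hS4, Set.ncard_coe_finset, hcard'] at hle
    omega
  have he' := hmiss e he6 heS
  have ho' := hmiss o ho6 hoS
  have hkey : me[i - 1]? = some x ∧ mo[i - 1]? = some x := by
    rcases he' with rfl | rfl <;> rcases ho' with rfl | rfl
    · exact absurd rfl heo
    · exact ⟨hge, hgo⟩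
    · exact ⟨hgo, hge⟩
    · exact absurd rfl heo
  obtain ⟨hx', hi'⟩ := huniq i hi x hkey.1 hkey.2
  simp [hx', hi']

set_option maxHeartbeats 4000000 in
/-- a copious Condorcet domain satisfies a unique complete set of
never conditions: for each triple there is exactly one pair `(x,i)` with
`x N_{a,b,c} i`. -/
theorem stmt_14 [DecidableEq α] (A : Finset α) (D : Set (List α))
    (hC : IsCondorcet A D)
    (hcop : ∀ a ∈ A, ∀ b ∈ A, ∀ c ∈ A, a ≠ b → a ≠ c → b ≠ c →
      (restr {a, b, c} '' D).ncard = 4) :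
    ∀ a ∈ A, ∀ b ∈ A, ∀ c ∈ A, a ≠ b → a ≠ c → b ≠ c →
      ∃! p : α × ℕ, p.1 ∈ ({a, b, c} : Finset α) ∧
        p.2 ∈ ({1, 2, 3} : Finset ℕ) ∧ Never D a b c p.1 p.2 := by
  intro a ha b hb c hc hab hac hbc
  have hba : b ≠ a := hab.symm
  have hca : c ≠ a := hac.symm
  have hcb : c ≠ b := hbc.symm
  have u_a1 : ∀ i ∈ ({1, 2, 3} : Finset ℕ), ∀ x : α,
      ([a, b, c] : List α)[i - 1]? = some x →
      ([a, c, b] : List α)[i - 1]? = some x → x = a ∧ i = 1 := by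
    intro i hi x h1 h2
    have hi' : i = 1 ∨ i = 2 ∨ i = 3 := by simpa using hi
    rcases hi' with rfl | rfl | rfl <;> simp at h1 h2 <;>
      first
        | exact ⟨h1.symm, rfl⟩
        | exact absurd (h1.trans h2.symm) (by assumption)
        | exact absurd (h2.trans h1.symm) (by assumption)
  have u_b2 : ∀ i ∈ ({1, 2, 3} : Finset ℕ), ∀ x : α,
      ([a, b, c] : List α)[i - 1]? = some x →
      ([c, b, a] : List α)[i - 1]? = some x → x = b ∧ i = 2 := by
    intro i hi x h1 h2
    have hi' : i = 1 ∨ i = 2 ∨ i = 3 := by simpa using hi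
    rcases hi' with rfl | rfl | rfl <;> simp at h1 h2 <;>
      first
        | exact ⟨h1.symm, rfl⟩
        | exact absurd (h1.trans h2.symm) (by assumption)
        | exact absurd (h2.trans h1.symm) (by assumption)
  have u_c3 : ∀ i ∈ ({1, 2, 3} : Finset ℕ), ∀ x : α,
      ([a, b, c] : List α)[i - 1]? = some x →
      ([b, a, c] : List α)[i - 1]? = some x → x = c ∧ i = 3 := by
    intro i hi x h1 h2
    have hi' : i = 1 ∨ i = 2 ∨ i = 3 := by simpa using hi
    rcases hi' with rfl | rfl | rfl <;> simp at h1 h2 <;>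
      first
        | exact ⟨h1.symm, rfl⟩
        | exact absurd (h1.trans h2.symm) (by assumption)
        | exact absurd (h2.trans h1.symm) (by assumption)
  have u_c2 : ∀ i ∈ ({1, 2, 3} : Finset ℕ), ∀ x : α,
      ([b, c, a] : List α)[i - 1]? = some x →
      ([a, c, b] : List α)[i - 1]? = some x → x = c ∧ i = 2 := by
    intro i hi x h1 h2
    have hi' : i = 1 ∨ i = 2 ∨ i = 3 := by simpa using hi
    rcases hi' with rfl | rfl | rfl <;> simp at h1 h2 <;>
      first
        | exact ⟨h1.symm, rfl⟩
        | exact absurd (h1.trans h2.symm) (by assumption)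
        | exact absurd (h2.trans h1.symm) (by assumption)
  have u_a3 : ∀ i ∈ ({1, 2, 3} : Finset ℕ), ∀ x : α,
      ([b, c, a] : List α)[i - 1]? = some x →
      ([c, b, a] : List α)[i - 1]? = some x → x = a ∧ i = 3 := by
    intro i hi x h1 h2
    have hi' : i = 1 ∨ i = 2 ∨ i = 3 := by simpa using hi
    rcases hi' with rfl | rfl | rfl <;> simp at h1 h2 <;>
      first
        | exact ⟨h1.symm, rfl⟩
        | exact absurd (h1.trans h2.symm) (by assumption)
        | exact absurd (h2.trans h1.symm) (by assumption)
  have u_b1 : ∀ i ∈ ({1, 2, 3} : Finset ℕ), ∀ x : α,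
      ([b, c, a] : List α)[i - 1]? = some x →
      ([b, a, c] : List α)[i - 1]? = some x → x = b ∧ i = 1 := by
    intro i hi x h1 h2
    have hi' : i = 1 ∨ i = 2 ∨ i = 3 := by simpa using hi
    rcases hi' with rfl | rfl | rfl <;> simp at h1 h2 <;>
      first
        | exact ⟨h1.symm, rfl⟩
        | exact absurd (h1.trans h2.symm) (by assumption)
        | exact absurd (h2.trans h1.symm) (by assumption)
  have u_b3 : ∀ i ∈ ({1, 2, 3} : Finset ℕ), ∀ x : α,
      ([c, a, b] : List α)[i - 1]? = some x →
      ([a, c, b] : List α)[i - 1]? = some x → x = b ∧ i = 3 := by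
    intro i hi x h1 h2
    have hi' : i = 1 ∨ i = 2 ∨ i = 3 := by simpa using hi
    rcases hi' with rfl | rfl | rfl <;> simp at h1 h2 <;>
      first
        | exact ⟨h1.symm, rfl⟩
        | exact absurd (h1.trans h2.symm) (by assumption)
        | exact absurd (h2.trans h1.symm) (by assumption)
  have u_c1 : ∀ i ∈ ({1, 2, 3} : Finset ℕ), ∀ x : α,
      ([c, a, b] : List α)[i - 1]? = some x →
      ([c, b, a] : List α)[i - 1]? = some x → x = c ∧ i = 1 := by
    intro i hi x h1 h2
    have hi' : i = 1 ∨ i = 2 ∨ i = 3 := by simpa using hi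
    rcases hi' with rfl | rfl | rfl <;> simp at h1 h2 <;>
      first
        | exact ⟨h1.symm, rfl⟩
        | exact absurd (h1.trans h2.symm) (by assumption)
        | exact absurd (h2.trans h1.symm) (by assumption)
  have u_a2 : ∀ i ∈ ({1, 2, 3} : Finset ℕ), ∀ x : α,
      ([c, a, b] : List α)[i - 1]? = some x →
      ([b, a, c] : List α)[i - 1]? = some x → x = a ∧ i = 2 := by
    intro i hi x h1 h2
    have hi' : i = 1 ∨ i = 2 ∨ i = 3 := by simpa using hi
    rcases hi' with rfl | rfl | rfl <;> simp at h1 h2 <;>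
      first
        | exact ⟨h1.symm, rfl⟩
        | exact absurd (h1.trans h2.symm) (by assumption)
        | exact absurd (h2.trans h1.symm) (by assumption)
  have hS4 : (restr {a, b, c} '' D).ncard = 4 := hcop a ha b hb c hc hab hac hbc
  have hsubA : ({a, b, c} : Finset α) ⊆ A := by
    intro z hz
    simp only [Finset.mem_insert, Finset.mem_singleton] at hz
    rcases hz with rfl | rfl | rfl <;> assumption
  have hr6 : ∀ w ∈ D, restr {a, b, c} w = [a, b, c] ∨ restr {a, b, c} w = [b, c, a] ∨
      restr {a, b, c} w = [c, a, b] ∨ restr {a, b, c} w = [a, c, b] ∨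
      restr {a, b, c} w = [c, b, a] ∨ restr {a, b, c} w = [b, a, c] := by
    intro w hw
    obtain ⟨hnd, hts⟩ := restr_linord (hC.1 w hw) hsubA
    exact perm3 hnd hts hab hac hbc
  set six : Finset (List α) :=
    {[a, b, c], [b, c, a], [c, a, b], [a, c, b], [c, b, a], [b, a, c]} with hsix
  have hcard : six.card = 6 := by
    rw [hsix]
    rw [Finset.card_insert_of_notMem (by simp [hab, hac, hbc, hba, hca, hcb]),
      Finset.card_insert_of_notMem (by simp [hab, hac, hbc, hba, hca, hcb]),
      Finset.card_insert_of_notMem (by simp [hab, hac, hbc, hba, hca, hcb]),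
      Finset.card_insert_of_notMem (by simp [hab, hac, hbc, hba, hca, hcb]),
      Finset.card_insert_of_notMem (by simp [hab, hac, hbc, hba, hca, hcb])]
    simp
  have hsub : restr {a, b, c} '' D ⊆ ↑six := by
    rintro s ⟨w, hw, rfl⟩
    rcases hr6 w hw with h | h | h | h | h | h <;> rw [h] <;> simp [hsix]
  -- the nine never-condition characterisations
  have chA1 : Never D a b c a 1 ↔
      ([a, b, c] ∉ restr {a, b, c} '' D ∧ [a, c, b] ∉ restr {a, b, c} '' D) :=
    never_char (by simp) (by simp)
      (by intro w hw h1 h2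
          rcases hr6 w hw with h | h | h | h | h | h <;>
            first
              | exact absurd h h1
              | exact absurd h h2
              | (rw [h]; simp [hab, hac, hbc, hba, hca, hcb]))
  have chB2 : Never D a b c b 2 ↔
      ([a, b, c] ∉ restr {a, b, c} '' D ∧ [c, b, a] ∉ restr {a, b, c} '' D) :=
    never_char (by simp) (by simp)
      (by intro w hw h1 h2
          rcases hr6 w hw with h | h | h | h | h | h <;>
            first
              | exact absurd h h1
              | exact absurd h h2
              | (rw [h]; simp [hab, hac, hbc, hba, hca, hcb]))
  have chC3 : Never D a b c c 3 ↔
      ([a, b, c] ∉ restr {a, b, c} '' D ∧ [b, a, c] ∉ restr {a, b, c} '' D) :=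
    never_char (by simp) (by simp)
      (by intro w hw h1 h2
          rcases hr6 w hw with h | h | h | h | h | h <;>
            first
              | exact absurd h h1
              | exact absurd h h2
              | (rw [h]; simp [hab, hac, hbc, hba, hca, hcb]))
  have chC2 : Never D a b c c 2 ↔
      ([b, c, a] ∉ restr {a, b, c} '' D ∧ [a, c, b] ∉ restr {a, b, c} '' D) :=
    never_char (by simp) (by simp)
      (by intro w hw h1 h2
          rcases hr6 w hw with h | h | h | h | h | h <;>
            first
              | exact absurd h h1
              | exact absurd h h2
              | (rw [h]; simp [hab, hac, hbc, hba, hca, hcb]))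
  have chA3 : Never D a b c a 3 ↔
      ([b, c, a] ∉ restr {a, b, c} '' D ∧ [c, b, a] ∉ restr {a, b, c} '' D) :=
    never_char (by simp) (by simp)
      (by intro w hw h1 h2
          rcases hr6 w hw with h | h | h | h | h | h <;>
            first
              | exact absurd h h1
              | exact absurd h h2
              | (rw [h]; simp [hab, hac, hbc, hba, hca, hcb]))
  have chB1 : Never D a b c b 1 ↔
      ([b, c, a] ∉ restr {a, b, c} '' D ∧ [b, a, c] ∉ restr {a, b, c} '' D) :=
    never_char (by simp) (by simp)
      (by intro w hw h1 h2
          rcases hr6 w hw with h | h | h | h | h | h <;>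
            first
              | exact absurd h h1
              | exact absurd h h2
              | (rw [h]; simp [hab, hac, hbc, hba, hca, hcb]))
  have chB3 : Never D a b c b 3 ↔
      ([c, a, b] ∉ restr {a, b, c} '' D ∧ [a, c, b] ∉ restr {a, b, c} '' D) :=
    never_char (by simp) (by simp)
      (by intro w hw h1 h2
          rcases hr6 w hw with h | h | h | h | h | h <;>
            first
              | exact absurd h h1
              | exact absurd h h2
              | (rw [h]; simp [hab, hac, hbc, hba, hca, hcb]))
  have chC1 : Never D a b c c 1 ↔
      ([c, a, b] ∉ restr {a, b, c} '' D ∧ [c, b, a] ∉ restr {a, b, c} '' D) :=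
    never_char (by simp) (by simp)
      (by intro w hw h1 h2
          rcases hr6 w hw with h | h | h | h | h | h <;>
            first
              | exact absurd h h1
              | exact absurd h h2
              | (rw [h]; simp [hab, hac, hbc, hba, hca, hcb]))
  have chA2 : Never D a b c a 2 ↔
      ([c, a, b] ∉ restr {a, b, c} '' D ∧ [b, a, c] ∉ restr {a, b, c} '' D) :=
    never_char (by simp) (by simp)
      (by intro w hw h1 h2
          rcases hr6 w hw with h | h | h | h | h | h <;>
            first
              | exact absurd h h1
              | exact absurd h h2
              | (rw [h]; simp [hab, hac, hbc, hba, hca, hcb]))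
  -- key: every never condition pins down a pair of missing orders
  have key : ∀ x i, x ∈ ({a, b, c} : Finset α) → i ∈ ({1, 2, 3} : Finset ℕ) →
      Never D a b c x i →
      ∃ e o, e ∈ six ∧ o ∈ six ∧ e ≠ o ∧ e ∉ restr {a, b, c} '' D ∧
        o ∉ restr {a, b, c} '' D ∧ e[i - 1]? = some x ∧ o[i - 1]? = some x := by
    intro x i hx hi hn
    have hx' : x = a ∨ x = b ∨ x = c := by simpa using hx
    have hi' : i = 1 ∨ i = 2 ∨ i = 3 := by simpa using hi
    rcases hx' with h | h | h <;> rcases hi' with hI | hI | hI <;> rw [h, hI] at hn ⊢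
    · exact ⟨[a, b, c], [a, c, b], by simp [hsix], by simp [hsix], by simp [hbc],
        (chA1.mp hn).1, (chA1.mp hn).2, by simp, by simp⟩
    · exact ⟨[c, a, b], [b, a, c], by simp [hsix], by simp [hsix], by simp [hbc],
        (chA2.mp hn).1, (chA2.mp hn).2, by simp, by simp⟩
    · exact ⟨[b, c, a], [c, b, a], by simp [hsix], by simp [hsix], by simp [hbc],
        (chA3.mp hn).1, (chA3.mp hn).2, by simp, by simp⟩
    · exact ⟨[b, c, a], [b, a, c], by simp [hsix], by simp [hsix], by simp [hac],
        (chB1.mp hn).1, (chB1.mp hn).2, by simp, by simp⟩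
    · exact ⟨[a, b, c], [c, b, a], by simp [hsix], by simp [hsix], by simp [hac],
        (chB2.mp hn).1, (chB2.mp hn).2, by simp, by simp⟩
    · exact ⟨[c, a, b], [a, c, b], by simp [hsix], by simp [hsix], by simp [hac],
        (chB3.mp hn).1, (chB3.mp hn).2, by simp, by simp⟩
    · exact ⟨[c, a, b], [c, b, a], by simp [hsix], by simp [hsix], by simp [hab],
        (chC1.mp hn).1, (chC1.mp hn).2, by simp, by simp⟩
    · exact ⟨[b, c, a], [a, c, b], by simp [hsix], by simp [hsix], by simp [hab],
        (chC2.mp hn).1, (chC2.mp hn).2, by simp, by simp⟩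
    · exact ⟨[a, b, c], [b, a, c], by simp [hsix], by simp [hsix], by simp [hab],
        (chC3.mp hn).1, (chC3.mp hn).2, by simp, by simp⟩
  -- cyclic triples cannot fully appear
  have hsetcomm : ({a, c, b} : Finset α) = {a, b, c} := by
    rw [Finset.pair_comm c b]
  have hE3 : ¬([a, b, c] ∈ restr {a, b, c} '' D ∧ [b, c, a] ∈ restr {a, b, c} '' D ∧
      [c, a, b] ∈ restr {a, b, c} '' D) := by
    rintro ⟨⟨u, hu, hru⟩, ⟨v, hv, hrv⟩, ⟨t, ht, hrt⟩⟩
    exact cycle_contra hC ha hb hc hab hac hbc hu hv ht hru hrv hrt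
  have hO3 : ¬([a, c, b] ∈ restr {a, b, c} '' D ∧ [c, b, a] ∈ restr {a, b, c} '' D ∧
      [b, a, c] ∈ restr {a, b, c} '' D) := by
    rintro ⟨⟨u, hu, hru⟩, ⟨v, hv, hrv⟩, ⟨t, ht, hrt⟩⟩
    rw [← hsetcomm] at hru hrv hrt
    exact cycle_contra hC ha hc hb hac hab hcb hu hv ht hru hrv hrt
  have hmE : [a, b, c] ∉ restr {a, b, c} '' D ∨ [b, c, a] ∉ restr {a, b, c} '' D ∨
      [c, a, b] ∉ restr {a, b, c} '' D := by
    by_contra hcon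
    push_neg at hcon
    exact hE3 hcon
  have hmO : [a, c, b] ∉ restr {a, b, c} '' D ∨ [c, b, a] ∉ restr {a, b, c} '' D ∨
      [b, a, c] ∉ restr {a, b, c} '' D := by
    by_contra hcon
    push_neg at hcon
    exact hO3 hcon
  rcases hmE with hE | hE | hE <;> rcases hmO with hO | hO | hO
  · exact outer_case hcard hsub hS4 (by simp [hsix]) (by simp [hsix]) (by simp [hbc])
      hE hO (by simp) (by simp) (chA1.mpr ⟨hE, hO⟩) key
      u_a1
  · exact outer_case hcard hsub hS4 (by simp [hsix]) (by simp [hsix]) (by simp [hac])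
      hE hO (by simp) (by simp) (chB2.mpr ⟨hE, hO⟩) key
      u_b2
  · exact outer_case hcard hsub hS4 (by simp [hsix]) (by simp [hsix]) (by simp [hab])
      hE hO (by simp) (by simp) (chC3.mpr ⟨hE, hO⟩) key
      u_c3
  · exact outer_case hcard hsub hS4 (by simp [hsix]) (by simp [hsix]) (by simp [hab])
      hE hO (by simp) (by simp) (chC2.mpr ⟨hE, hO⟩) key
      u_c2
  · exact outer_case hcard hsub hS4 (by simp [hsix]) (by simp [hsix]) (by simp [hbc])
      hE hO (by simp) (by simp) (chA3.mpr ⟨hE, hO⟩) key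
      u_a3
  · exact outer_case hcard hsub hS4 (by simp [hsix]) (by simp [hsix]) (by simp [hac])
      hE hO (by simp) (by simp) (chB1.mpr ⟨hE, hO⟩) key
      u_b1
  · exact outer_case hcard hsub hS4 (by simp [hsix]) (by simp [hsix]) (by simp [hac])
      hE hO (by simp) (by simp) (chB3.mpr ⟨hE, hO⟩) key
      u_b3
  · exact outer_case hcard hsub hS4 (by simp [hsix]) (by simp [hsix]) (by simp [hab])
      hE hO (by simp) (by simp) (chC1.mpr ⟨hE, hO⟩) key
      u_c1
  · exact outer_case hcard hsub hS4 (by simp [hsix]) (by simp [hsix]) (by simp [hbc])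
      hE hO (by simp) (by simp) (chA2.mpr ⟨hE, hO⟩) key
      u_a2
end

section
/- Up to isomorphism (relabelling of alternatives) there are exactly three maximal Condorcet domains on a 3-element set {a,b,c}, namely {abc, acb, cab, cba}, {abc, bca, acb, cba}, and {abc, bac, bca, cba}; in particular every maximal Condorcet domain on 3 alternatives has exactly 4 elements. -/
/-! Linear orders on a finite set `A` are encoded as duplicate-free lists
(top alternative first) whose set of entries is `A`. -/

variable {α β : Type*}

section AuxCondorcet
variable [DecidableEq α]

lemma aux_shape {a b c : α} (hab : a ≠ b) (hac : a ≠ c) (hbc : b ≠ c)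
    {w : List α} (h : IsLinOrd ({a,b,c} : Finset α) w) :
    w = [a,b,c] ∨ w = [a,c,b] ∨ w = [b,a,c] ∨ w = [b,c,a] ∨ w = [c,a,b] ∨ w = [c,b,a] := by
  obtain ⟨hnd, hs⟩ := h
  have hlen : w.length = 3 := by
    have h1 := List.toFinset_card_of_nodup hnd
    rw [hs, Finset.card_insert_of_notMem (by simp [hab, hac]),
      Finset.card_insert_of_notMem (by simp [hbc]), Finset.card_singleton] at h1
    omega
  obtain ⟨x, y, z, rfl⟩ := List.length_eq_three.1 hlen
  have hx : x = a ∨ x = b ∨ x = c := by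
    have : x ∈ ({a,b,c} : Finset α) := by rw [← hs]; simp
    simpa using this
  have hy : y = a ∨ y = b ∨ y = c := by
    have : y ∈ ({a,b,c} : Finset α) := by rw [← hs]; simp
    simpa using this
  have hz : z = a ∨ z = b ∨ z = c := by
    have : z ∈ ({a,b,c} : Finset α) := by rw [← hs]; simp
    simpa using this
  simp only [List.nodup_cons, List.mem_cons] at hnd
  rcases hx with rfl|rfl|rfl <;> rcases hy with rfl|rfl|rfl <;> rcases hz with rfl|rfl|rfl <;>
    simp_all

set_option maxHeartbeats 1000000 in
lemma aux_countP {β : Type*} [DecidableEq β] {v1 v2 v3 v4 v5 v6 : β}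
    (h12 : v1 ≠ v2) (h13 : v1 ≠ v3) (h14 : v1 ≠ v4) (h15 : v1 ≠ v5) (h16 : v1 ≠ v6)
    (h23 : v2 ≠ v3) (h24 : v2 ≠ v4) (h25 : v2 ≠ v5) (h26 : v2 ≠ v6)
    (h34 : v3 ≠ v4) (h35 : v3 ≠ v5) (h36 : v3 ≠ v6)
    (h45 : v4 ≠ v5) (h46 : v4 ≠ v6) (h56 : v5 ≠ v6)
    (f : β → Bool) :
    ∀ P : List β, (∀ w ∈ P, w = v1 ∨ w = v2 ∨ w = v3 ∨ w = v4 ∨ w = v5 ∨ w = v6) →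
    P.countP f = (if f v1 then P.countP (fun w => decide (w = v1)) else 0)
      + (if f v2 then P.countP (fun w => decide (w = v2)) else 0)
      + (if f v3 then P.countP (fun w => decide (w = v3)) else 0)
      + (if f v4 then P.countP (fun w => decide (w = v4)) else 0)
      + (if f v5 then P.countP (fun w => decide (w = v5)) else 0)
      + (if f v6 then P.countP (fun w => decide (w = v6)) else 0) := by
  intro P
  induction P with
  | nil => simp
  | cons x P ih =>
    intro hm
    have hx := hm x (by simp)
    have h' := ih (fun w hw => hm w (by simp [hw]))
    simp only [List.countP_cons, h']
    rcases hx with rfl|rfl|rfl|rfl|rfl|rfl <;>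
      simp [h12, h13, h14, h15, h16, h23, h24, h25, h26, h34, h35, h36, h45, h46, h56,
        h12.symm, h13.symm, h14.symm, h15.symm, h16.symm, h23.symm, h24.symm, h25.symm,
        h26.symm, h34.symm, h35.symm, h36.symm, h45.symm, h46.symm, h56.symm] <;>
      split_ifs <;> omega

set_option maxHeartbeats 4000000 in
lemma aux_cond {a b c : α} (hab : a ≠ b) (hac : a ≠ c) (hbc : b ≠ c)
    {D : Set (List α)}
    (hD : ∀ w ∈ D, IsLinOrd ({a,b,c} : Finset α) w)
    (h1 : [a,b,c] ∉ D ∨ [b,c,a] ∉ D ∨ [c,a,b] ∉ D)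
    (h2 : [a,c,b] ∉ D ∨ [b,a,c] ∉ D ∨ [c,b,a] ∉ D) :
    IsCondorcet ({a,b,c} : Finset α) D := by
  refine ⟨hD, ?_⟩
  intro P hP hodd x hx y hy z hz
  have hmem : ∀ w ∈ P, w = [a,b,c] ∨ w = [a,c,b] ∨ w = [b,a,c] ∨ w = [b,c,a] ∨
      w = [c,a,b] ∨ w = [c,b,a] := fun w hw => aux_shape hab hac hbc (hD w (hP w hw))
  have key := fun f => aux_countP (v1 := ([a,b,c] : List α)) (v2 := [a,c,b]) (v3 := [b,a,c])
    (v4 := [b,c,a]) (v5 := [c,a,b]) (v6 := [c,b,a])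
    (by simp [hab, hac, hbc, hab.symm, hac.symm, hbc.symm])
    (by simp [hab, hac, hbc, hab.symm, hac.symm, hbc.symm])
    (by simp [hab, hac, hbc, hab.symm, hac.symm, hbc.symm])
    (by simp [hab, hac, hbc, hab.symm, hac.symm, hbc.symm])
    (by simp [hab, hac, hbc, hab.symm, hac.symm, hbc.symm])
    (by simp [hab, hac, hbc, hab.symm, hac.symm, hbc.symm])
    (by simp [hab, hac, hbc, hab.symm, hac.symm, hbc.symm])
    (by simp [hab, hac, hbc, hab.symm, hac.symm, hbc.symm])
    (by simp [hab, hac, hbc, hab.symm, hac.symm, hbc.symm])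
    (by simp [hab, hac, hbc, hab.symm, hac.symm, hbc.symm])
    (by simp [hab, hac, hbc, hab.symm, hac.symm, hbc.symm])
    (by simp [hab, hac, hbc, hab.symm, hac.symm, hbc.symm])
    (by simp [hab, hac, hbc, hab.symm, hac.symm, hbc.symm])
    (by simp [hab, hac, hbc, hab.symm, hac.symm, hbc.symm])
    (by simp [hab, hac, hbc, hab.symm, hac.symm, hbc.symm])
    f P hmem
  have eab : P.countP (fun w => decide (w.idxOf a < w.idxOf b)) =
      P.countP (fun w => decide (w = [a,b,c])) + P.countP (fun w => decide (w = [a,c,b]))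
        + P.countP (fun w => decide (w = [c,a,b])) := by
    rw [key]
    simp [List.idxOf_cons_ne, List.idxOf_cons_self, hab, hac, hbc, hab.symm, hac.symm, hbc.symm]
  have eba : P.countP (fun w => decide (w.idxOf b < w.idxOf a)) =
      P.countP (fun w => decide (w = [b,a,c])) + P.countP (fun w => decide (w = [b,c,a]))
        + P.countP (fun w => decide (w = [c,b,a])) := by
    rw [key]
    simp [List.idxOf_cons_ne, List.idxOf_cons_self, hab, hac, hbc, hab.symm, hac.symm, hbc.symm]
  have ebc : P.countP (fun w => decide (w.idxOf b < w.idxOf c)) =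
      P.countP (fun w => decide (w = [a,b,c])) + P.countP (fun w => decide (w = [b,a,c]))
        + P.countP (fun w => decide (w = [b,c,a])) := by
    rw [key]
    simp [List.idxOf_cons_ne, List.idxOf_cons_self, hab, hac, hbc, hab.symm, hac.symm, hbc.symm]
  have ecb : P.countP (fun w => decide (w.idxOf c < w.idxOf b)) =
      P.countP (fun w => decide (w = [a,c,b])) + P.countP (fun w => decide (w = [c,a,b]))
        + P.countP (fun w => decide (w = [c,b,a])) := by
    rw [key]
    simp [List.idxOf_cons_ne, List.idxOf_cons_self, hab, hac, hbc, hab.symm, hac.symm, hbc.symm]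
  have eac : P.countP (fun w => decide (w.idxOf a < w.idxOf c)) =
      P.countP (fun w => decide (w = [a,b,c])) + P.countP (fun w => decide (w = [a,c,b]))
        + P.countP (fun w => decide (w = [b,a,c])) := by
    rw [key]
    simp [List.idxOf_cons_ne, List.idxOf_cons_self, hab, hac, hbc, hab.symm, hac.symm, hbc.symm]
  have eca : P.countP (fun w => decide (w.idxOf c < w.idxOf a)) =
      P.countP (fun w => decide (w = [b,c,a])) + P.countP (fun w => decide (w = [c,a,b]))
        + P.countP (fun w => decide (w = [c,b,a])) := by
    rw [key]
    simp [List.idxOf_cons_ne, List.idxOf_cons_self, hab, hac, hbc, hab.symm, hac.symm, hbc.symm]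
  have hlen : P.length = P.countP (fun w => decide (w = [a,b,c]))
      + P.countP (fun w => decide (w = [a,c,b])) + P.countP (fun w => decide (w = [b,a,c]))
      + P.countP (fun w => decide (w = [b,c,a])) + P.countP (fun w => decide (w = [c,a,b]))
      + P.countP (fun w => decide (w = [c,b,a])) := by
    have h := key (fun _ => true)
    simpa using h
  obtain ⟨k, hk⟩ := hodd
  have z1 : P.countP (fun w => decide (w = [a,b,c])) = 0 ∨
      P.countP (fun w => decide (w = [b,c,a])) = 0 ∨
      P.countP (fun w => decide (w = [c,a,b])) = 0 := by
    rcases h1 with h|h|h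
    · exact Or.inl (List.countP_eq_zero.2 fun u hu hd => h (by
        rw [← (by simpa using hd : u = [a,b,c])]; exact hP _ hu))
    · exact Or.inr (Or.inl (List.countP_eq_zero.2 fun u hu hd => h (by
        rw [← (by simpa using hd : u = [b,c,a])]; exact hP _ hu)))
    · exact Or.inr (Or.inr (List.countP_eq_zero.2 fun u hu hd => h (by
        rw [← (by simpa using hd : u = [c,a,b])]; exact hP _ hu)))
  have z2 : P.countP (fun w => decide (w = [a,c,b])) = 0 ∨
      P.countP (fun w => decide (w = [b,a,c])) = 0 ∨
      P.countP (fun w => decide (w = [c,b,a])) = 0 := by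
    rcases h2 with h|h|h
    · exact Or.inl (List.countP_eq_zero.2 fun u hu hd => h (by
        rw [← (by simpa using hd : u = [a,c,b])]; exact hP _ hu))
    · exact Or.inr (Or.inl (List.countP_eq_zero.2 fun u hu hd => h (by
        rw [← (by simpa using hd : u = [b,a,c])]; exact hP _ hu)))
    · exact Or.inr (Or.inr (List.countP_eq_zero.2 fun u hu hd => h (by
        rw [← (by simpa using hd : u = [c,b,a])]; exact hP _ hu)))
  simp only [Finset.mem_insert, Finset.mem_singleton] at hx hy hz
  unfold Maj
  rcases hx with rfl|rfl|rfl <;> rcases hy with rfl|rfl|rfl <;> rcases hz with rfl|rfl|rfl <;>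
    intro hxy hyz <;> rcases z1 with z|z|z <;> rcases z2 with z'|z'|z' <;> omega

lemma aux_cyc1 {a b c : α} (hab : a ≠ b) (hac : a ≠ c) (hbc : b ≠ c)
    {D : Set (List α)} (hD : IsCondorcet ({a,b,c} : Finset α) D)
    (m1 : [a,b,c] ∈ D) (m2 : [b,c,a] ∈ D) (m3 : [c,a,b] ∈ D) : False := by
  have h := hD.2 [[a,b,c],[b,c,a],[c,a,b]]
    (by intro w hw; simp only [List.mem_cons, List.not_mem_nil, or_false] at hw
        rcases hw with rfl|rfl|rfl <;> assumption)
    (by simp; decide) a (by simp) b (by simp) c (by simp)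
    (by unfold Maj; simp [List.idxOf_cons_ne, List.idxOf_cons_self, hab, hac, hbc, hab.symm, hac.symm, hbc.symm])
    (by unfold Maj; simp [List.idxOf_cons_ne, List.idxOf_cons_self, hab, hac, hbc, hab.symm, hac.symm, hbc.symm])
  unfold Maj at h
  simp [List.idxOf_cons_ne, List.idxOf_cons_self, hab, hac, hbc, hab.symm, hac.symm, hbc.symm] at h

lemma aux_cyc2 {a b c : α} (hab : a ≠ b) (hac : a ≠ c) (hbc : b ≠ c)
    {D : Set (List α)} (hD : IsCondorcet ({a,b,c} : Finset α) D)
    (m1 : [a,c,b] ∈ D) (m2 : [b,a,c] ∈ D) (m3 : [c,b,a] ∈ D) : False := by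
  have h := hD.2 [[a,c,b],[c,b,a],[b,a,c]]
    (by intro w hw; simp only [List.mem_cons, List.not_mem_nil, or_false] at hw
        rcases hw with rfl|rfl|rfl <;> assumption)
    (by simp; decide) a (by simp) c (by simp) b (by simp)
    (by unfold Maj; simp [List.idxOf_cons_ne, List.idxOf_cons_self, hab, hac, hbc, hab.symm, hac.symm, hbc.symm])
    (by unfold Maj; simp [List.idxOf_cons_ne, List.idxOf_cons_self, hab, hac, hbc, hab.symm, hac.symm, hbc.symm])
  unfold Maj at h
  simp [List.idxOf_cons_ne, List.idxOf_cons_self, hab, hac, hbc, hab.symm, hac.symm, hbc.symm] at h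

lemma aux_lin3 {x y z : α} (hxy : x ≠ y) (hxz : x ≠ z) (hyz : y ≠ z) :
    IsLinOrd ({x,y,z} : Finset α) [x,y,z] :=
  ⟨by simp [hxy, hxz, hyz], by simp⟩

lemma aux_card3 {x y z : α} (hxy : x ≠ y) (hxz : x ≠ z) (hyz : y ≠ z) :
    ({x,y,z} : Finset α).card = 3 := by
  rw [Finset.card_insert_of_notMem (by simp [hxy, hxz]),
    Finset.card_insert_of_notMem (by simp [hyz]), Finset.card_singleton]

lemma aux_ncard4 {l1 l2 l3 l4 : List α} (h12 : l1 ≠ l2) (h13 : l1 ≠ l3) (h14 : l1 ≠ l4)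
    (h23 : l2 ≠ l3) (h24 : l2 ≠ l4) (h34 : l3 ≠ l4) :
    ({l1,l2,l3,l4} : Set (List α)).ncard = 4 := by
  rw [Set.ncard_insert_of_notMem (by simp [h12, h13, h14]),
    Set.ncard_insert_of_notMem (by simp [h23, h24]),
    Set.ncard_insert_of_notMem (by simp [h34]), Set.ncard_singleton]

lemma aux_max1 {x y z : α} (hxy : x ≠ y) (hxz : x ≠ z) (hyz : y ≠ z) :
    MaxCondorcet ({x,y,z} : Finset α) ({[x,y,z],[x,z,y],[z,x,y],[z,y,x]} : Set (List α)) := by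
  have hlin : ∀ w ∈ ({[x,y,z],[x,z,y],[z,x,y],[z,y,x]} : Set (List α)), IsLinOrd ({x,y,z} : Finset α) w := by
    intro w hw
    simp only [Set.mem_insert_iff, Set.mem_singleton_iff] at hw
    rcases hw with rfl|rfl|rfl|rfl
    · have e : ({x,y,z} : Finset α) = {x,y,z} := by ext t; simp; try tauto
      rw [← e]; exact aux_lin3 hxy hxz hyz
    · have e : ({x,z,y} : Finset α) = {x,y,z} := by ext t; simp; try tauto
      rw [← e]; exact aux_lin3 hxz hxy hyz.symm
    · have e : ({z,x,y} : Finset α) = {x,y,z} := by ext t; simp; try tauto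
      rw [← e]; exact aux_lin3 hxz.symm hyz.symm hxy
    · have e : ({z,y,x} : Finset α) = {x,y,z} := by ext t; simp; try tauto
      rw [← e]; exact aux_lin3 hyz.symm hxz.symm hxy.symm
  constructor
  · exact aux_cond hxy hxz hyz hlin (Or.inr (Or.inl (show [y,z,x] ∉ _ by simp [hxy, hxz, hyz, hxy.symm, hxz.symm, hyz.symm]))) (Or.inr (Or.inl (show [y,x,z] ∉ _ by simp [hxy, hxz, hyz, hxy.symm, hxz.symm, hyz.symm])))
  · intro D' hD' hsub w hw
    rcases aux_shape hxy hxz hyz (hD'.1 w hw) with rfl|rfl|rfl|rfl|rfl|rfl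
    · simp
    · simp
    · exact (aux_cyc2 hxy hxz hyz hD' (hsub (by simp)) hw (hsub (by simp))).elim
    · exact (aux_cyc1 hxy hxz hyz hD' (hsub (by simp)) hw (hsub (by simp))).elim
    · simp
    · simp

lemma aux_max2 {x y z : α} (hxy : x ≠ y) (hxz : x ≠ z) (hyz : y ≠ z) :
    MaxCondorcet ({x,y,z} : Finset α) ({[x,y,z],[y,z,x],[x,z,y],[z,y,x]} : Set (List α)) := by
  have hlin : ∀ w ∈ ({[x,y,z],[y,z,x],[x,z,y],[z,y,x]} : Set (List α)), IsLinOrd ({x,y,z} : Finset α) w := by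
    intro w hw
    simp only [Set.mem_insert_iff, Set.mem_singleton_iff] at hw
    rcases hw with rfl|rfl|rfl|rfl
    · have e : ({x,y,z} : Finset α) = {x,y,z} := by ext t; simp; try tauto
      rw [← e]; exact aux_lin3 hxy hxz hyz
    · have e : ({y,z,x} : Finset α) = {x,y,z} := by ext t; simp; try tauto
      rw [← e]; exact aux_lin3 hyz hxy.symm hxz.symm
    · have e : ({x,z,y} : Finset α) = {x,y,z} := by ext t; simp; try tauto
      rw [← e]; exact aux_lin3 hxz hxy hyz.symm
    · have e : ({z,y,x} : Finset α) = {x,y,z} := by ext t; simp; try tauto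
      rw [← e]; exact aux_lin3 hyz.symm hxz.symm hxy.symm
  constructor
  · exact aux_cond hxy hxz hyz hlin (Or.inr (Or.inr (show [z,x,y] ∉ _ by simp [hxy, hxz, hyz, hxy.symm, hxz.symm, hyz.symm]))) (Or.inr (Or.inl (show [y,x,z] ∉ _ by simp [hxy, hxz, hyz, hxy.symm, hxz.symm, hyz.symm])))
  · intro D' hD' hsub w hw
    rcases aux_shape hxy hxz hyz (hD'.1 w hw) with rfl|rfl|rfl|rfl|rfl|rfl
    · simp
    · simp
    · exact (aux_cyc2 hxy hxz hyz hD' (hsub (by simp)) hw (hsub (by simp))).elim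
    · simp
    · exact (aux_cyc1 hxy hxz hyz hD' (hsub (by simp)) (hsub (by simp)) hw).elim
    · simp

lemma aux_max3 {x y z : α} (hxy : x ≠ y) (hxz : x ≠ z) (hyz : y ≠ z) :
    MaxCondorcet ({x,y,z} : Finset α) ({[x,y,z],[y,x,z],[y,z,x],[z,y,x]} : Set (List α)) := by
  have hlin : ∀ w ∈ ({[x,y,z],[y,x,z],[y,z,x],[z,y,x]} : Set (List α)), IsLinOrd ({x,y,z} : Finset α) w := by
    intro w hw
    simp only [Set.mem_insert_iff, Set.mem_singleton_iff] at hw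
    rcases hw with rfl|rfl|rfl|rfl
    · have e : ({x,y,z} : Finset α) = {x,y,z} := by ext t; simp; try tauto
      rw [← e]; exact aux_lin3 hxy hxz hyz
    · have e : ({y,x,z} : Finset α) = {x,y,z} := by ext t; simp; try tauto
      rw [← e]; exact aux_lin3 hxy.symm hyz hxz
    · have e : ({y,z,x} : Finset α) = {x,y,z} := by ext t; simp; try tauto
      rw [← e]; exact aux_lin3 hyz hxy.symm hxz.symm
    · have e : ({z,y,x} : Finset α) = {x,y,z} := by ext t; simp; try tauto
      rw [← e]; exact aux_lin3 hyz.symm hxz.symm hxy.symm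
  constructor
  · exact aux_cond hxy hxz hyz hlin (Or.inr (Or.inr (show [z,x,y] ∉ _ by simp [hxy, hxz, hyz, hxy.symm, hxz.symm, hyz.symm]))) (Or.inl (show [x,z,y] ∉ _ by simp [hxy, hxz, hyz, hxy.symm, hxz.symm, hyz.symm]))
  · intro D' hD' hsub w hw
    rcases aux_shape hxy hxz hyz (hD'.1 w hw) with rfl|rfl|rfl|rfl|rfl|rfl
    · simp
    · exact (aux_cyc2 hxy hxz hyz hD' hw (hsub (by simp)) (hsub (by simp))).elim
    · simp
    · simp
    · exact (aux_cyc1 hxy hxz hyz hD' (hsub (by simp)) (hsub (by simp)) hw).elim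
    · simp

end AuxCondorcet

/-- up to relabelling of alternatives there are exactly three
maximal Condorcet domains on a 3-element set `{a,b,c}`, namely
`{abc, acb, cab, cba}`, `{abc, bca, acb, cba}` and `{abc, bac, bca, cba}`;
in particular every maximal Condorcet domain on 3 alternatives has exactly
4 elements. -/


theorem stmt_15 [DecidableEq α] (a b c : α)
    (hab : a ≠ b) (hac : a ≠ c) (hbc : b ≠ c) (D : Set (List α)) :
    (MaxCondorcet ({a, b, c} : Finset α) D ↔
      ∃ σ : Equiv.Perm α, (∀ x ∈ ({a, b, c} : Finset α), σ x ∈ ({a, b, c} : Finset α)) ∧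
        (D = List.map σ '' ({[a, b, c], [a, c, b], [c, a, b], [c, b, a]} : Set (List α)) ∨
         D = List.map σ '' ({[a, b, c], [b, c, a], [a, c, b], [c, b, a]} : Set (List α)) ∨
         D = List.map σ '' ({[a, b, c], [b, a, c], [b, c, a], [c, b, a]} : Set (List α)))) ∧
    (MaxCondorcet ({a, b, c} : Finset α) D → D.ncard = 4) := by
  have fwd : MaxCondorcet ({a, b, c} : Finset α) D →
      ((∃ σ : Equiv.Perm α, (∀ x ∈ ({a, b, c} : Finset α), σ x ∈ ({a, b, c} : Finset α)) ∧
        (D = List.map σ '' ({[a, b, c], [a, c, b], [c, a, b], [c, b, a]} : Set (List α)) ∨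
         D = List.map σ '' ({[a, b, c], [b, c, a], [a, c, b], [c, b, a]} : Set (List α)) ∨
         D = List.map σ '' ({[a, b, c], [b, a, c], [b, c, a], [c, b, a]} : Set (List α)))) ∧ D.ncard = 4) := by
    intro hMC
    obtain ⟨hC, hmax⟩ := hMC
    have h1 : [a,b,c] ∉ D ∨ [b,c,a] ∉ D ∨ [c,a,b] ∉ D := by
      by_contra hcon; push_neg at hcon
      exact aux_cyc1 hab hac hbc hC hcon.1 hcon.2.1 hcon.2.2
    have h2 : [a,c,b] ∉ D ∨ [b,a,c] ∉ D ∨ [c,b,a] ∉ D := by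
      by_contra hcon; push_neg at hcon
      exact aux_cyc2 hab hac hbc hC hcon.1 hcon.2.1 hcon.2.2
    rcases h1 with hu|hu|hu <;> rcases h2 with hv|hv|hv
    · have hM : MaxCondorcet ({a,b,c} : Finset α) ({[b,a,c],[b,c,a],[c,b,a],[c,a,b]} : Set (List α)) := by
        have h := aux_max1 hab.symm hbc hac
        rwa [show ({b,a,c} : Finset α) = {a,b,c} from by ext t; simp; try tauto] at h
      have hsub : D ⊆ ({[b,a,c],[b,c,a],[c,b,a],[c,a,b]} : Set (List α)) := by
        intro w hw
        rcases aux_shape hab hac hbc (hC.1 w hw) with rfl|rfl|rfl|rfl|rfl|rfl <;>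
          first
          | exact absurd hw hu
          | exact absurd hw hv
          | simp
      have hEq : D = ({[b,a,c],[b,c,a],[c,b,a],[c,a,b]} : Set (List α)) := Set.Subset.antisymm hsub (hmax _ hM.1 hsub)
      refine ⟨⟨Equiv.swap a b, ?_, Or.inl ?_⟩, ?_⟩
      · intro t ht
        simp only [Finset.mem_insert, Finset.mem_singleton] at ht ⊢
        rcases ht with rfl|rfl|rfl <;>
          simp [Equiv.swap_apply_left, Equiv.swap_apply_right,
            Equiv.swap_apply_of_ne_of_ne, hab, hac, hbc, hab.symm, hac.symm, hbc.symm]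
      · rw [hEq]
        simp [Set.image_insert_eq, Set.image_singleton, Equiv.swap_apply_left, Equiv.swap_apply_right, Equiv.swap_apply_of_ne_of_ne hac.symm hbc.symm]
      · rw [hEq]
        exact aux_ncard4 (by simp [hab, hac, hbc, hab.symm, hac.symm, hbc.symm]) (by simp [hab, hac, hbc, hab.symm, hac.symm, hbc.symm]) (by simp [hab, hac, hbc, hab.symm, hac.symm, hbc.symm])
          (by simp [hab, hac, hbc, hab.symm, hac.symm, hbc.symm]) (by simp [hab, hac, hbc, hab.symm, hac.symm, hbc.symm]) (by simp [hab, hac, hbc, hab.symm, hac.symm, hbc.symm])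
    · have hM : MaxCondorcet ({a,b,c} : Finset α) ({[a,c,b],[c,a,b],[c,b,a],[b,c,a]} : Set (List α)) := by
        have h := aux_max3 hac hab hbc.symm
        rwa [show ({a,c,b} : Finset α) = {a,b,c} from by ext t; simp; try tauto] at h
      have hsub : D ⊆ ({[a,c,b],[c,a,b],[c,b,a],[b,c,a]} : Set (List α)) := by
        intro w hw
        rcases aux_shape hab hac hbc (hC.1 w hw) with rfl|rfl|rfl|rfl|rfl|rfl <;>
          first
          | exact absurd hw hu
          | exact absurd hw hv
          | simp
      have hEq : D = ({[a,c,b],[c,a,b],[c,b,a],[b,c,a]} : Set (List α)) := Set.Subset.antisymm hsub (hmax _ hM.1 hsub)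
      refine ⟨⟨Equiv.swap b c, ?_, Or.inr (Or.inr ?_)⟩, ?_⟩
      · intro t ht
        simp only [Finset.mem_insert, Finset.mem_singleton] at ht ⊢
        rcases ht with rfl|rfl|rfl <;>
          simp [Equiv.swap_apply_left, Equiv.swap_apply_right,
            Equiv.swap_apply_of_ne_of_ne, hab, hac, hbc, hab.symm, hac.symm, hbc.symm]
      · rw [hEq]
        simp [Set.image_insert_eq, Set.image_singleton, Equiv.swap_apply_left, Equiv.swap_apply_right, Equiv.swap_apply_of_ne_of_ne hab hac]
      · rw [hEq]
        exact aux_ncard4 (by simp [hab, hac, hbc, hab.symm, hac.symm, hbc.symm]) (by simp [hab, hac, hbc, hab.symm, hac.symm, hbc.symm]) (by simp [hab, hac, hbc, hab.symm, hac.symm, hbc.symm])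
          (by simp [hab, hac, hbc, hab.symm, hac.symm, hbc.symm]) (by simp [hab, hac, hbc, hab.symm, hac.symm, hbc.symm]) (by simp [hab, hac, hbc, hab.symm, hac.symm, hbc.symm])
    · have hM : MaxCondorcet ({a,b,c} : Finset α) ({[b,a,c],[a,c,b],[b,c,a],[c,a,b]} : Set (List α)) := by
        have h := aux_max2 hab.symm hbc hac
        rwa [show ({b,a,c} : Finset α) = {a,b,c} from by ext t; simp; try tauto] at h
      have hsub : D ⊆ ({[b,a,c],[a,c,b],[b,c,a],[c,a,b]} : Set (List α)) := by
        intro w hw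
        rcases aux_shape hab hac hbc (hC.1 w hw) with rfl|rfl|rfl|rfl|rfl|rfl <;>
          first
          | exact absurd hw hu
          | exact absurd hw hv
          | simp
      have hEq : D = ({[b,a,c],[a,c,b],[b,c,a],[c,a,b]} : Set (List α)) := Set.Subset.antisymm hsub (hmax _ hM.1 hsub)
      refine ⟨⟨Equiv.swap a b, ?_, Or.inr (Or.inl ?_)⟩, ?_⟩
      · intro t ht
        simp only [Finset.mem_insert, Finset.mem_singleton] at ht ⊢
        rcases ht with rfl|rfl|rfl <;>
          simp [Equiv.swap_apply_left, Equiv.swap_apply_right,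
            Equiv.swap_apply_of_ne_of_ne, hab, hac, hbc, hab.symm, hac.symm, hbc.symm]
      · rw [hEq]
        simp [Set.image_insert_eq, Set.image_singleton, Equiv.swap_apply_left, Equiv.swap_apply_right, Equiv.swap_apply_of_ne_of_ne hac.symm hbc.symm]
      · rw [hEq]
        exact aux_ncard4 (by simp [hab, hac, hbc, hab.symm, hac.symm, hbc.symm]) (by simp [hab, hac, hbc, hab.symm, hac.symm, hbc.symm]) (by simp [hab, hac, hbc, hab.symm, hac.symm, hbc.symm])
          (by simp [hab, hac, hbc, hab.symm, hac.symm, hbc.symm]) (by simp [hab, hac, hbc, hab.symm, hac.symm, hbc.symm]) (by simp [hab, hac, hbc, hab.symm, hac.symm, hbc.symm])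
    · have hM : MaxCondorcet ({a,b,c} : Finset α) ({[c,b,a],[b,a,c],[c,a,b],[a,b,c]} : Set (List α)) := by
        have h := aux_max2 hbc.symm hac.symm hab.symm
        rwa [show ({c,b,a} : Finset α) = {a,b,c} from by ext t; simp; try tauto] at h
      have hsub : D ⊆ ({[c,b,a],[b,a,c],[c,a,b],[a,b,c]} : Set (List α)) := by
        intro w hw
        rcases aux_shape hab hac hbc (hC.1 w hw) with rfl|rfl|rfl|rfl|rfl|rfl <;>
          first
          | exact absurd hw hu
          | exact absurd hw hv
          | simp
      have hEq : D = ({[c,b,a],[b,a,c],[c,a,b],[a,b,c]} : Set (List α)) := Set.Subset.antisymm hsub (hmax _ hM.1 hsub)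
      refine ⟨⟨Equiv.swap a c, ?_, Or.inr (Or.inl ?_)⟩, ?_⟩
      · intro t ht
        simp only [Finset.mem_insert, Finset.mem_singleton] at ht ⊢
        rcases ht with rfl|rfl|rfl <;>
          simp [Equiv.swap_apply_left, Equiv.swap_apply_right,
            Equiv.swap_apply_of_ne_of_ne, hab, hac, hbc, hab.symm, hac.symm, hbc.symm]
      · rw [hEq]
        simp [Set.image_insert_eq, Set.image_singleton, Equiv.swap_apply_left, Equiv.swap_apply_right, Equiv.swap_apply_of_ne_of_ne hab.symm hbc]
      · rw [hEq]
        exact aux_ncard4 (by simp [hab, hac, hbc, hab.symm, hac.symm, hbc.symm]) (by simp [hab, hac, hbc, hab.symm, hac.symm, hbc.symm]) (by simp [hab, hac, hbc, hab.symm, hac.symm, hbc.symm])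
          (by simp [hab, hac, hbc, hab.symm, hac.symm, hbc.symm]) (by simp [hab, hac, hbc, hab.symm, hac.symm, hbc.symm]) (by simp [hab, hac, hbc, hab.symm, hac.symm, hbc.symm])
    · have hM : MaxCondorcet ({a,b,c} : Finset α) ({[a,b,c],[a,c,b],[c,a,b],[c,b,a]} : Set (List α)) := by
        have h := aux_max1 hab hac hbc
        exact h
      have hsub : D ⊆ ({[a,b,c],[a,c,b],[c,a,b],[c,b,a]} : Set (List α)) := by
        intro w hw
        rcases aux_shape hab hac hbc (hC.1 w hw) with rfl|rfl|rfl|rfl|rfl|rfl <;>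
          first
          | exact absurd hw hu
          | exact absurd hw hv
          | simp
      have hEq : D = ({[a,b,c],[a,c,b],[c,a,b],[c,b,a]} : Set (List α)) := Set.Subset.antisymm hsub (hmax _ hM.1 hsub)
      refine ⟨⟨Equiv.refl α, ?_, Or.inl ?_⟩, ?_⟩
      · intro t ht
        simp only [Finset.mem_insert, Finset.mem_singleton] at ht ⊢
        rcases ht with rfl|rfl|rfl <;>
          simp [Equiv.swap_apply_left, Equiv.swap_apply_right,
            Equiv.swap_apply_of_ne_of_ne, hab, hac, hbc, hab.symm, hac.symm, hbc.symm]
      · rw [hEq]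
        simp [Set.image_insert_eq, Set.image_singleton]
      · rw [hEq]
        exact aux_ncard4 (by simp [hab, hac, hbc, hab.symm, hac.symm, hbc.symm]) (by simp [hab, hac, hbc, hab.symm, hac.symm, hbc.symm]) (by simp [hab, hac, hbc, hab.symm, hac.symm, hbc.symm])
          (by simp [hab, hac, hbc, hab.symm, hac.symm, hbc.symm]) (by simp [hab, hac, hbc, hab.symm, hac.symm, hbc.symm]) (by simp [hab, hac, hbc, hab.symm, hac.symm, hbc.symm])
    · have hM : MaxCondorcet ({a,b,c} : Finset α) ({[b,a,c],[a,b,c],[a,c,b],[c,a,b]} : Set (List α)) := by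
        have h := aux_max3 hab.symm hbc hac
        rwa [show ({b,a,c} : Finset α) = {a,b,c} from by ext t; simp; try tauto] at h
      have hsub : D ⊆ ({[b,a,c],[a,b,c],[a,c,b],[c,a,b]} : Set (List α)) := by
        intro w hw
        rcases aux_shape hab hac hbc (hC.1 w hw) with rfl|rfl|rfl|rfl|rfl|rfl <;>
          first
          | exact absurd hw hu
          | exact absurd hw hv
          | simp
      have hEq : D = ({[b,a,c],[a,b,c],[a,c,b],[c,a,b]} : Set (List α)) := Set.Subset.antisymm hsub (hmax _ hM.1 hsub)
      refine ⟨⟨Equiv.swap a b, ?_, Or.inr (Or.inr ?_)⟩, ?_⟩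
      · intro t ht
        simp only [Finset.mem_insert, Finset.mem_singleton] at ht ⊢
        rcases ht with rfl|rfl|rfl <;>
          simp [Equiv.swap_apply_left, Equiv.swap_apply_right,
            Equiv.swap_apply_of_ne_of_ne, hab, hac, hbc, hab.symm, hac.symm, hbc.symm]
      · rw [hEq]
        simp [Set.image_insert_eq, Set.image_singleton, Equiv.swap_apply_left, Equiv.swap_apply_right, Equiv.swap_apply_of_ne_of_ne hac.symm hbc.symm]
      · rw [hEq]
        exact aux_ncard4 (by simp [hab, hac, hbc, hab.symm, hac.symm, hbc.symm]) (by simp [hab, hac, hbc, hab.symm, hac.symm, hbc.symm]) (by simp [hab, hac, hbc, hab.symm, hac.symm, hbc.symm])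
          (by simp [hab, hac, hbc, hab.symm, hac.symm, hbc.symm]) (by simp [hab, hac, hbc, hab.symm, hac.symm, hbc.symm]) (by simp [hab, hac, hbc, hab.symm, hac.symm, hbc.symm])
    · have hM : MaxCondorcet ({a,b,c} : Finset α) ({[a,b,c],[b,a,c],[b,c,a],[c,b,a]} : Set (List α)) := by
        have h := aux_max3 hab hac hbc
        exact h
      have hsub : D ⊆ ({[a,b,c],[b,a,c],[b,c,a],[c,b,a]} : Set (List α)) := by
        intro w hw
        rcases aux_shape hab hac hbc (hC.1 w hw) with rfl|rfl|rfl|rfl|rfl|rfl <;>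
          first
          | exact absurd hw hu
          | exact absurd hw hv
          | simp
      have hEq : D = ({[a,b,c],[b,a,c],[b,c,a],[c,b,a]} : Set (List α)) := Set.Subset.antisymm hsub (hmax _ hM.1 hsub)
      refine ⟨⟨Equiv.refl α, ?_, Or.inr (Or.inr ?_)⟩, ?_⟩
      · intro t ht
        simp only [Finset.mem_insert, Finset.mem_singleton] at ht ⊢
        rcases ht with rfl|rfl|rfl <;>
          simp [Equiv.swap_apply_left, Equiv.swap_apply_right,
            Equiv.swap_apply_of_ne_of_ne, hab, hac, hbc, hab.symm, hac.symm, hbc.symm]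
      · rw [hEq]
        simp [Set.image_insert_eq, Set.image_singleton]
      · rw [hEq]
        exact aux_ncard4 (by simp [hab, hac, hbc, hab.symm, hac.symm, hbc.symm]) (by simp [hab, hac, hbc, hab.symm, hac.symm, hbc.symm]) (by simp [hab, hac, hbc, hab.symm, hac.symm, hbc.symm])
          (by simp [hab, hac, hbc, hab.symm, hac.symm, hbc.symm]) (by simp [hab, hac, hbc, hab.symm, hac.symm, hbc.symm]) (by simp [hab, hac, hbc, hab.symm, hac.symm, hbc.symm])
    · have hM : MaxCondorcet ({a,b,c} : Finset α) ({[a,b,c],[b,c,a],[a,c,b],[c,b,a]} : Set (List α)) := by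
        have h := aux_max2 hab hac hbc
        exact h
      have hsub : D ⊆ ({[a,b,c],[b,c,a],[a,c,b],[c,b,a]} : Set (List α)) := by
        intro w hw
        rcases aux_shape hab hac hbc (hC.1 w hw) with rfl|rfl|rfl|rfl|rfl|rfl <;>
          first
          | exact absurd hw hu
          | exact absurd hw hv
          | simp
      have hEq : D = ({[a,b,c],[b,c,a],[a,c,b],[c,b,a]} : Set (List α)) := Set.Subset.antisymm hsub (hmax _ hM.1 hsub)
      refine ⟨⟨Equiv.refl α, ?_, Or.inr (Or.inl ?_)⟩, ?_⟩
      · intro t ht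
        simp only [Finset.mem_insert, Finset.mem_singleton] at ht ⊢
        rcases ht with rfl|rfl|rfl <;>
          simp [Equiv.swap_apply_left, Equiv.swap_apply_right,
            Equiv.swap_apply_of_ne_of_ne, hab, hac, hbc, hab.symm, hac.symm, hbc.symm]
      · rw [hEq]
        simp [Set.image_insert_eq, Set.image_singleton]
      · rw [hEq]
        exact aux_ncard4 (by simp [hab, hac, hbc, hab.symm, hac.symm, hbc.symm]) (by simp [hab, hac, hbc, hab.symm, hac.symm, hbc.symm]) (by simp [hab, hac, hbc, hab.symm, hac.symm, hbc.symm])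
          (by simp [hab, hac, hbc, hab.symm, hac.symm, hbc.symm]) (by simp [hab, hac, hbc, hab.symm, hac.symm, hbc.symm]) (by simp [hab, hac, hbc, hab.symm, hac.symm, hbc.symm])
    · have hM : MaxCondorcet ({a,b,c} : Finset α) ({[a,c,b],[a,b,c],[b,a,c],[b,c,a]} : Set (List α)) := by
        have h := aux_max1 hac hab hbc.symm
        rwa [show ({a,c,b} : Finset α) = {a,b,c} from by ext t; simp; try tauto] at h
      have hsub : D ⊆ ({[a,c,b],[a,b,c],[b,a,c],[b,c,a]} : Set (List α)) := by
        intro w hw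
        rcases aux_shape hab hac hbc (hC.1 w hw) with rfl|rfl|rfl|rfl|rfl|rfl <;>
          first
          | exact absurd hw hu
          | exact absurd hw hv
          | simp
      have hEq : D = ({[a,c,b],[a,b,c],[b,a,c],[b,c,a]} : Set (List α)) := Set.Subset.antisymm hsub (hmax _ hM.1 hsub)
      refine ⟨⟨Equiv.swap b c, ?_, Or.inl ?_⟩, ?_⟩
      · intro t ht
        simp only [Finset.mem_insert, Finset.mem_singleton] at ht ⊢
        rcases ht with rfl|rfl|rfl <;>
          simp [Equiv.swap_apply_left, Equiv.swap_apply_right,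
            Equiv.swap_apply_of_ne_of_ne, hab, hac, hbc, hab.symm, hac.symm, hbc.symm]
      · rw [hEq]
        simp [Set.image_insert_eq, Set.image_singleton, Equiv.swap_apply_left, Equiv.swap_apply_right, Equiv.swap_apply_of_ne_of_ne hab hac]
      · rw [hEq]
        exact aux_ncard4 (by simp [hab, hac, hbc, hab.symm, hac.symm, hbc.symm]) (by simp [hab, hac, hbc, hab.symm, hac.symm, hbc.symm]) (by simp [hab, hac, hbc, hab.symm, hac.symm, hbc.symm])
          (by simp [hab, hac, hbc, hab.symm, hac.symm, hbc.symm]) (by simp [hab, hac, hbc, hab.symm, hac.symm, hbc.symm]) (by simp [hab, hac, hbc, hab.symm, hac.symm, hbc.symm])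
  have bwd : (∃ σ : Equiv.Perm α, (∀ x ∈ ({a, b, c} : Finset α), σ x ∈ ({a, b, c} : Finset α)) ∧
        (D = List.map σ '' ({[a, b, c], [a, c, b], [c, a, b], [c, b, a]} : Set (List α)) ∨
         D = List.map σ '' ({[a, b, c], [b, c, a], [a, c, b], [c, b, a]} : Set (List α)) ∨
         D = List.map σ '' ({[a, b, c], [b, a, c], [b, c, a], [c, b, a]} : Set (List α)))) → MaxCondorcet ({a, b, c} : Finset α) D := by
    rintro ⟨σ, hσ, hcase⟩
    have dab : σ a ≠ σ b := fun h => hab (σ.injective h)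
    have dac : σ a ≠ σ c := fun h => hac (σ.injective h)
    have dbc : σ b ≠ σ c := fun h => hbc (σ.injective h)
    have hfs : ({σ a, σ b, σ c} : Finset α) = {a,b,c} := by
      apply Finset.eq_of_subset_of_card_le
      · intro t ht
        simp only [Finset.mem_insert, Finset.mem_singleton] at ht
        rcases ht with rfl|rfl|rfl
        · exact hσ a (by simp)
        · exact hσ b (by simp)
        · exact hσ c (by simp)
      · rw [aux_card3 hab hac hbc, aux_card3 dab dac dbc]
    rcases hcase with h|h|h
    · have himg : List.map (⇑σ) '' ({[a, b, c], [a, c, b], [c, a, b], [c, b, a]} : Set (List α))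
          = {[σ a, σ b, σ c], [σ a, σ c, σ b], [σ c, σ a, σ b], [σ c, σ b, σ a]} := by
        simp [Set.image_insert_eq, Set.image_singleton]
      rw [h, himg]
      have hm := aux_max1 dab dac dbc
      rwa [hfs] at hm
    · have himg : List.map (⇑σ) '' ({[a, b, c], [b, c, a], [a, c, b], [c, b, a]} : Set (List α))
          = {[σ a, σ b, σ c], [σ b, σ c, σ a], [σ a, σ c, σ b], [σ c, σ b, σ a]} := by
        simp [Set.image_insert_eq, Set.image_singleton]
      rw [h, himg]
      have hm := aux_max2 dab dac dbc
      rwa [hfs] at hm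
    · have himg : List.map (⇑σ) '' ({[a, b, c], [b, a, c], [b, c, a], [c, b, a]} : Set (List α))
          = {[σ a, σ b, σ c], [σ b, σ a, σ c], [σ b, σ c, σ a], [σ c, σ b, σ a]} := by
        simp [Set.image_insert_eq, Set.image_singleton]
      rw [h, himg]
      have hm := aux_max3 dab dac dbc
      rwa [hfs] at hm
  exact ⟨⟨fun h => (fwd h).1, bwd⟩, fun h => (fwd h).2⟩
end

section
/- The tensor product (F2(a,b) ⊗ F2(c,d))(ab, cd) is isomorphic to the Fishburn domain F4 via the bijection 1↦b, 2↦a, 3↦d, 4↦c; explicitly, the 9-element domain {abcd, abdc, bacd, badc, acbd, acdb, cabd, cadb, cdab} on {a,b,c,d} maps onto F4 = {1234, 1243, 2134, 2143, 2413, 2431, 4213, 4231, 4321}. -/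
/-! Linear orders on a finite set `A` are encoded as duplicate-free lists
(top alternative first) whose set of entries is `A`. -/

variable {α β : Type*}

theorem restr_cons' [DecidableEq α] (B : Finset α) (x : α) (l : List α) :
    restr B (x :: l) = if x ∈ B then x :: restr B l else restr B l := by
  simp [restr, List.filter_cons]

theorem restr_nil' [DecidableEq α] (B : Finset α) : restr B [] = [] := rfl

set_option maxHeartbeats 4000000 in
/-- `(F2(a,b) ⊗ F2(c,d))(ab, cd)` equals the explicit 9-element
domain and is isomorphic to the Fishburn domain `F4` via `1↦b, 2↦a, 3↦d, 4↦c`. -/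
theorem stmt_17 [DecidableEq α] (a b c d : α)
    (hab : a ≠ b) (hac : a ≠ c) (had : a ≠ d)
    (hbc : b ≠ c) (hbd : b ≠ d) (hcd : c ≠ d) :
    tensor ({a, b} : Finset α) ({c, d} : Finset α)
        ({[a, b], [b, a]} : Set (List α)) ({[c, d], [d, c]} : Set (List α))
        [a, b] [c, d] =
      ({[a, b, c, d], [a, b, d, c], [b, a, c, d], [b, a, d, c], [a, c, b, d],
        [a, c, d, b], [c, a, b, d], [c, a, d, b], [c, d, a, b]} : Set (List α)) ∧
    (List.map (fun n : ℕ => if n = 1 then b else if n = 2 then a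
        else if n = 3 then d else c)) ''
        ({[1, 2, 3, 4], [1, 2, 4, 3], [2, 1, 3, 4], [2, 1, 4, 3], [2, 4, 1, 3],
          [2, 4, 3, 1], [4, 2, 1, 3], [4, 2, 3, 1], [4, 3, 2, 1]} : Set (List ℕ)) =
      tensor ({a, b} : Finset α) ({c, d} : Finset α)
        ({[a, b], [b, a]} : Set (List α)) ({[c, d], [d, c]} : Set (List α))
        [a, b] [c, d] := by
  have key : tensor ({a, b} : Finset α) ({c, d} : Finset α)
        ({[a, b], [b, a]} : Set (List α)) ({[c, d], [d, c]} : Set (List α))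
        [a, b] [c, d] =
      ({[a, b, c, d], [a, b, d, c], [b, a, c, d], [b, a, d, c], [a, c, b, d],
        [a, c, d, b], [c, a, b, d], [c, a, d, b], [c, d, a, b]} : Set (List α)) := by
    ext w
    constructor
    · rintro (⟨x, hx, y, hy, rfl⟩ | h)
      · rcases hx with rfl | rfl <;> rcases hy with rfl | rfl <;>
          simp [Set.mem_insert_iff]
      · obtain ⟨⟨hnd, hfin⟩, hAB, hCD⟩ := h
        have hlen : w.length = 4 := by
          have h1 := List.toFinset_card_of_nodup hnd
          rw [hfin] at h1
          rw [show ({a,b} ∪ {c,d} : Finset α) = {a,b,c,d} by ext x; simp; tauto] at h1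
          rw [show ({a,b,c,d} : Finset α).card = 4 by
            rw [Finset.card_insert_of_notMem (by simp [hab, hac, had]),
              Finset.card_insert_of_notMem (by simp [hbc, hbd]),
              Finset.card_insert_of_notMem (by simp [hcd])]
            simp] at h1
          omega
        match w, hlen, hfin, hAB, hCD with
        | [x0, x1, x2, x3], _, hfin, hAB, hCD =>
          have mem : ∀ x ∈ [x0,x1,x2,x3], x = a ∨ x = b ∨ x = c ∨ x = d := by
            intro x hx
            have h2 : x ∈ ({a,b} ∪ {c,d} : Finset α) := by rw [← hfin]; simpa using hx
            simp at h2; tauto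
          have h0 := mem x0 (by simp); have h1 := mem x1 (by simp)
          have h2 := mem x2 (by simp); have h3 := mem x3 (by simp)
          clear mem hfin hnd
          rcases h0 with rfl|rfl|rfl|rfl <;> rcases h1 with rfl|rfl|rfl|rfl <;>
            rcases h2 with rfl|rfl|rfl|rfl <;> rcases h3 with rfl|rfl|rfl|rfl <;>
            simp_all [restr_cons', restr_nil', Set.mem_insert_iff,
              hab.symm, hac.symm, had.symm, hbc.symm, hbd.symm, hcd.symm]
    · intro hw
      simp only [Set.mem_insert_iff, Set.mem_singleton_iff] at hw
      rcases hw with rfl|rfl|rfl|rfl|rfl|rfl|rfl|rfl|rfl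
      · exact Or.inl ⟨[a,b], by simp, [c,d], by simp, rfl⟩
      · exact Or.inl ⟨[a,b], by simp, [d,c], by simp [Set.mem_insert_iff], rfl⟩
      · exact Or.inl ⟨[b,a], by simp [Set.mem_insert_iff], [c,d], by simp, rfl⟩
      · exact Or.inl ⟨[b,a], by simp [Set.mem_insert_iff], [d,c],
          by simp [Set.mem_insert_iff], rfl⟩
      all_goals
        exact Or.inr ⟨⟨by simp [hab, hac, had, hbc, hbd, hcd,
            hab.symm, hac.symm, had.symm, hbc.symm, hbd.symm, hcd.symm],
          by ext x; simp; try tauto⟩,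
          by simp [restr_cons', restr_nil', hab, hac, had, hbc, hbd, hcd,
            hab.symm, hac.symm, had.symm, hbc.symm, hbd.symm, hcd.symm],
          by simp [restr_cons', restr_nil', hab, hac, had, hbc, hbd, hcd,
            hab.symm, hac.symm, had.symm, hbc.symm, hbd.symm, hcd.symm]⟩
  refine ⟨key, ?_⟩
  rw [key]
  rw [show (({[1, 2, 3, 4], [1, 2, 4, 3], [2, 1, 3, 4], [2, 1, 4, 3], [2, 4, 1, 3],
      [2, 4, 3, 1], [4, 2, 1, 3], [4, 2, 3, 1], [4, 3, 2, 1]}) : Set (List ℕ)) =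
    insert [1,2,3,4] (insert [1,2,4,3] (insert [2,1,3,4] (insert [2,1,4,3]
      (insert [2,4,1,3] (insert [2,4,3,1] (insert [4,2,1,3] (insert [4,2,3,1]
      ({[4,3,2,1]} : Set (List ℕ))))))))) from rfl]
  simp only [Set.image_insert_eq, Set.image_singleton, List.map_cons, List.map_nil]
  norm_num
  ext w
  simp only [Set.mem_insert_iff, Set.mem_singleton_iff]
  tauto
end
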